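/- Define f : ℝ³ → ℝ by f(a, b, φ) = ½(a² + b²) − ab·cos φ. Then the 3×3 Hessian matrix of f at any point (a, b, φ), with variables ordered (a, b, φ), equals Q K Qᵀ, where K = diag(1, 1, −1) and Q is the 3×3 matrix whose rows (indexed by a, b, φ respectively) are (1, 0, 0), (−cos φ, sin φ, 0), and (b·sin φ, a + b·cos φ, √(a² + b² + ab·cos φ)). (Note a² + b² + ab·cos φ ≥ 0 for all real a, b, φ, so the square root is well defined.) -/

import Mathlib

open Matrix

noncomputable section StmtFourAux

abbrev E3 : Type := Fin 3 → ℝ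

def pr3 (i : Fin 3) : E3 →L[ℝ] ℝ := ContinuousLinearMap.proj i

def clm3 (c : Fin 3 → ℝ) : E3 →L[ℝ] ℝ := c 0 • pr3 0 + c 1 • pr3 1 + c 2 • pr3 2

lemma pr3_apply (i : Fin 3) (v : E3) : pr3 i v = v i := rfl

lemma clm3_apply (c : Fin 3 → ℝ) (v : E3) :
    clm3 c v = c 0 * v 0 + c 1 * v 1 + c 2 * v 2 := by
  simp [clm3, pr3_apply, smul_eq_mul]

lemma clm3_single (c : Fin 3 → ℝ) (j : Fin 3) : clm3 c (Pi.single j 1) = c j := by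
  fin_cases j <;> simp [clm3_apply, Pi.single_apply]

lemma hasFDerivAt_coord (i : Fin 3) (x : E3) :
    HasFDerivAt (fun v : E3 => v i) (pr3 i) x := (pr3 i).hasFDerivAt

lemma grad_g0 (x : E3) :
    HasFDerivAt (fun v : E3 => v 0 - v 1 * Real.cos (v 2))
      (clm3 ![1, -Real.cos (x 2), x 1 * Real.sin (x 2)]) x := by
  have h0 := hasFDerivAt_coord 0 x
  have h1 := hasFDerivAt_coord 1 x
  have h2 := hasFDerivAt_coord 2 x
  have hcos : HasFDerivAt (fun v : E3 => Real.cos (v 2)) ((-Real.sin (x 2)) • pr3 2) x :=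
    by have := (Real.hasDerivAt_cos (x 2)).comp_hasFDerivAt x h2; exact this
  refine (h0.sub (h1.mul hcos)).congr_fderiv ?_
  ext v
  simp [clm3_apply, pr3_apply, smul_eq_mul]
  ring

lemma grad_g1 (x : E3) :
    HasFDerivAt (fun v : E3 => v 1 - v 0 * Real.cos (v 2))
      (clm3 ![-Real.cos (x 2), 1, x 0 * Real.sin (x 2)]) x := by
  have h0 := hasFDerivAt_coord 0 x
  have h1 := hasFDerivAt_coord 1 x
  have h2 := hasFDerivAt_coord 2 x
  have hcos : HasFDerivAt (fun v : E3 => Real.cos (v 2)) ((-Real.sin (x 2)) • pr3 2) x :=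
    by have := (Real.hasDerivAt_cos (x 2)).comp_hasFDerivAt x h2; exact this
  refine (h1.sub (h0.mul hcos)).congr_fderiv ?_
  ext v
  simp [clm3_apply, pr3_apply, smul_eq_mul]
  ring

lemma grad_g2 (x : E3) :
    HasFDerivAt (fun v : E3 => v 0 * v 1 * Real.sin (v 2))
      (clm3 ![x 1 * Real.sin (x 2), x 0 * Real.sin (x 2), x 0 * x 1 * Real.cos (x 2)]) x := by
  have h0 := hasFDerivAt_coord 0 x
  have h1 := hasFDerivAt_coord 1 x
  have h2 := hasFDerivAt_coord 2 x
  have hsin : HasFDerivAt (fun v : E3 => Real.sin (v 2)) ((Real.cos (x 2)) • pr3 2) x :=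
    by have := (Real.hasDerivAt_sin (x 2)).comp_hasFDerivAt x h2; exact this
  refine ((h0.mul h1).mul hsin).congr_fderiv ?_
  ext v
  simp [clm3_apply, pr3_apply, smul_eq_mul]
  ring

lemma grad_f (f : E3 → ℝ)
    (hf : ∀ v, f v = (1 / 2) * ((v 0) ^ 2 + (v 1) ^ 2) - v 0 * v 1 * Real.cos (v 2)) (x : E3) :
    HasFDerivAt f
      (clm3 ![x 0 - x 1 * Real.cos (x 2), x 1 - x 0 * Real.cos (x 2),
        x 0 * x 1 * Real.sin (x 2)]) x := by
  have hfe : f = fun v : E3 => (1 / 2) * ((v 0) ^ 2 + (v 1) ^ 2) - v 0 * v 1 * Real.cos (v 2) :=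
    funext hf
  rw [hfe]
  have h0 := hasFDerivAt_coord 0 x
  have h1 := hasFDerivAt_coord 1 x
  have h2 := hasFDerivAt_coord 2 x
  have hcos : HasFDerivAt (fun v : E3 => Real.cos (v 2)) ((-Real.sin (x 2)) • pr3 2) x :=
    by have := (Real.hasDerivAt_cos (x 2)).comp_hasFDerivAt x h2; exact this
  have hsq : (fun v : E3 => (1 / 2) * ((v 0) ^ 2 + (v 1) ^ 2) - v 0 * v 1 * Real.cos (v 2))
      = fun v : E3 => (1 / 2 : ℝ) * (v 0 * v 0 + v 1 * v 1) - v 0 * v 1 * Real.cos (v 2) := by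
    funext v; ring
  rw [hsq]
  refine ((((h0.mul h0).add (h1.mul h1)).const_mul (1 / 2 : ℝ)).sub
    ((h0.mul h1).mul hcos)).congr_fderiv ?_
  ext v
  simp [clm3_apply, pr3_apply, smul_eq_mul]
  ring

lemma fderiv_f_eq (f : E3 → ℝ)
    (hf : ∀ v, f v = (1 / 2) * ((v 0) ^ 2 + (v 1) ^ 2) - v 0 * v 1 * Real.cos (v 2)) :
    fderiv ℝ f = fun x : E3 =>
      clm3 ![x 0 - x 1 * Real.cos (x 2), x 1 - x 0 * Real.cos (x 2),
        x 0 * x 1 * Real.sin (x 2)] :=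
  funext fun x => (grad_f f hf x).fderiv

/-- Second derivative as an explicit CLM. -/
def D2 (p : E3) : E3 →L[ℝ] (E3 →L[ℝ] ℝ) :=
  (clm3 ![1, -Real.cos (p 2), p 1 * Real.sin (p 2)]).smulRight (pr3 0)
  + (clm3 ![-Real.cos (p 2), 1, p 0 * Real.sin (p 2)]).smulRight (pr3 1)
  + (clm3 ![p 1 * Real.sin (p 2), p 0 * Real.sin (p 2),
      p 0 * p 1 * Real.cos (p 2)]).smulRight (pr3 2)

lemma hasFDerivAt_gradf (p : E3) :
    HasFDerivAt (fun x : E3 =>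
      clm3 ![x 0 - x 1 * Real.cos (x 2), x 1 - x 0 * Real.cos (x 2),
        x 0 * x 1 * Real.sin (x 2)]) (D2 p) p := by
  have hfun : (fun x : E3 =>
      clm3 ![x 0 - x 1 * Real.cos (x 2), x 1 - x 0 * Real.cos (x 2),
        x 0 * x 1 * Real.sin (x 2)])
      = fun x : E3 => (x 0 - x 1 * Real.cos (x 2)) • pr3 0
          + (x 1 - x 0 * Real.cos (x 2)) • pr3 1 + (x 0 * x 1 * Real.sin (x 2)) • pr3 2 := by
    funext x
    simp [clm3]
  rw [hfun]
  exact (((grad_g0 p).smul_const (pr3 0)).add ((grad_g1 p).smul_const (pr3 1))).add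
    ((grad_g2 p).smul_const (pr3 2))

end StmtFourAux

set_option maxHeartbeats 1000000 in
theorem stmt4 (f : (Fin 3 → ℝ) → ℝ)
    (hf : ∀ v, f v = (1 / 2) * ((v 0) ^ 2 + (v 1) ^ 2) - v 0 * v 1 * Real.cos (v 2)) :
    (∀ a b φ : ℝ, 0 ≤ a ^ 2 + b ^ 2 + a * b * Real.cos φ) ∧
    ∀ p : Fin 3 → ℝ,
      (Matrix.of fun i j : Fin 3 =>
          iteratedFDeriv ℝ 2 f p ![Pi.single i 1, Pi.single j 1])
        = (!![(1 : ℝ), 0, 0;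
              -Real.cos (p 2), Real.sin (p 2), 0;
              p 1 * Real.sin (p 2), p 0 + p 1 * Real.cos (p 2),
                Real.sqrt ((p 0) ^ 2 + (p 1) ^ 2 + p 0 * p 1 * Real.cos (p 2))])
          * (Matrix.diagonal ![(1 : ℝ), 1, -1])
          * (!![(1 : ℝ), 0, 0;
              -Real.cos (p 2), Real.sin (p 2), 0;
              p 1 * Real.sin (p 2), p 0 + p 1 * Real.cos (p 2),
                Real.sqrt ((p 0) ^ 2 + (p 1) ^ 2 + p 0 * p 1 * Real.cos (p 2))])ᵀ := by
  have hnn : ∀ a b φ : ℝ, 0 ≤ a ^ 2 + b ^ 2 + a * b * Real.cos φ := by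
    intro a b φ
    nlinarith [Real.neg_one_le_cos φ, Real.cos_le_one φ, sq_nonneg (a + b), sq_nonneg (a - b)]
  refine ⟨hnn, fun p => ?_⟩
  have hD2 : fderiv ℝ (fderiv ℝ f) p = D2 p := by
    rw [fderiv_f_eq f hf]
    exact (hasFDerivAt_gradf p).fderiv
  have hsq : Real.sqrt ((p 0) ^ 2 + (p 1) ^ 2 + p 0 * p 1 * Real.cos (p 2)) ^ 2
      = (p 0) ^ 2 + (p 1) ^ 2 + p 0 * p 1 * Real.cos (p 2) :=
    Real.sq_sqrt (hnn (p 0) (p 1) (p 2))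
  have hpyth := Real.sin_sq_add_cos_sq (p 2)
  ext i j
  rw [Matrix.of_apply, iteratedFDeriv_two_apply]
  simp only [Matrix.cons_val_zero, Matrix.cons_val_one, Matrix.head_cons]
  rw [hD2]
  have hentry : (D2 p) (Pi.single i 1) (Pi.single j 1)
      = clm3 ![1, -Real.cos (p 2), p 1 * Real.sin (p 2)] (Pi.single i 1) * (Pi.single j (1:ℝ) : E3) 0
        + clm3 ![-Real.cos (p 2), 1, p 0 * Real.sin (p 2)] (Pi.single i 1) * (Pi.single j (1:ℝ) : E3) 1
        + clm3 ![p 1 * Real.sin (p 2), p 0 * Real.sin (p 2),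
            p 0 * p 1 * Real.cos (p 2)] (Pi.single i 1) * (Pi.single j (1:ℝ) : E3) 2 := by
    simp [D2, pr3_apply, smul_eq_mul]
  rw [hentry, clm3_single, clm3_single, clm3_single]
  fin_cases i <;> fin_cases j <;>
    simp only [Matrix.mul_apply, Fin.sum_univ_three, Matrix.diagonal_apply, Matrix.transpose_apply,
      Matrix.cons_val', Matrix.cons_val_zero, Matrix.cons_val_one, Matrix.head_cons,
      Matrix.empty_val', Matrix.cons_val_fin_one, Matrix.head_fin_const, Matrix.cons_val_two,
      Matrix.tail_cons, Pi.single_eq_same, Pi.single_eq_of_ne (by decide : (0:Fin 3) ≠ 1),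
      Fin.isValue, if_true, if_false, Pi.single_apply, Fin.reduceEq, ite_true, ite_false,
      Matrix.vecHead, Matrix.vecTail] <;>
    simp [Fin.ext_iff] <;>
    nlinarith [hsq, hpyth]
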